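/- For every odd n ≥ 3, 1 + a_n(μ) = (a_{(n−1)/2}(μ) − a_{(n−3)/2}(μ)) · (a_{(n+1)/2}(μ) + a_{(n−1)/2}(μ)). -/
import Mathlib


noncomputable def a (μ : ℝ) : ℕ → ℝ
  | 0 => 1
  | 1 => 2 * (1 - μ)
  | n + 2 => 2 * (1 - μ) * a μ (n + 1) - a μ n

lemma a_add (μ : ℝ) (m n : ℕ) :
    a μ (m + n + 2) = a μ (m + 1) * a μ (n + 1) - a μ m * a μ n := by
  induction n using Nat.twoStepInduction with
  | zero =>
      show a μ (m + 2) = _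
      simp only [a]
      ring
  | one =>
      show a μ (m + 1 + 2) = _
      simp only [a]
      ring
  | more n ih1 ih2 =>
      have : m + (n + 2) + 2 = (m + n + 2) + 2 := by ring
      rw [this]
      show 2 * (1 - μ) * a μ (m + n + 2 + 1) - a μ (m + n + 2) = _
      rw [show m + n + 2 + 1 = m + (n + 1) + 2 from by ring, ih2, ih1]
      show _ = a μ (m + 1) * (2 * (1 - μ) * a μ (n + 2) - a μ (n+1)) - a μ m * (2 * (1 - μ) * a μ (n + 1) - a μ n)
      ring

lemma a_cassini (μ : ℝ) (k : ℕ) :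
    a μ (k + 1) * a μ (k + 1) - a μ k * a μ (k + 2) = 1 := by
  induction k with
  | zero => simp [a]
  | succ k ih =>
      have h3 : a μ (k + 3) = 2 * (1 - μ) * a μ (k + 2) - a μ (k + 1) := rfl
      have h2 : a μ (k + 2) = 2 * (1 - μ) * a μ (k + 1) - a μ k := rfl
      calc a μ (k + 2) * a μ (k + 2) - a μ (k+1) * a μ (k + 3)
          = a μ (k + 1) * a μ (k + 1) - a μ k * a μ (k + 2) := by rw [h3]; nth_rw 1 [h2]; ring
        _ = 1 := ih

theorem stmt8 (n : ℕ) (hn : 3 ≤ n) (hodd : Odd n) (μ : ℝ) :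
    1 + a μ n = (a μ ((n - 1) / 2) - a μ ((n - 3) / 2)) * (a μ ((n + 1) / 2) + a μ ((n - 1) / 2)) := by
  obtain ⟨m, rfl⟩ := hodd
  obtain ⟨j, rfl⟩ : ∃ j, m = j + 1 := ⟨m - 1, by omega⟩
  have e1 : (2 * (j + 1) + 1 - 1) / 2 = j + 1 := by omega
  have e2 : (2 * (j + 1) + 1 - 3) / 2 = j := by omega
  have e3 : (2 * (j + 1) + 1 + 1) / 2 = j + 2 := by omega
  rw [e1, e2, e3, show 2 * (j + 1) + 1 = (j + 1) + j + 2 from by ring, a_add]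
  have := a_cassini μ j
  nlinarith [this]
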